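/- Fix a set C of colors, a player a, and a strict weak order ≺_a on C^ω such that for every one-player game for a (with colors in C and preference ≺_a) there exists m ∈ ℕ such that a wins her winnable threshold games in it using uniformly finite memory m. Then in every antagonistic game g with players a and b (colors in C, a's preference ≺_a, ≺_b the inverse of ≺_a), for every finite-memory strategy s_b of b: if reg ∩ γ_b(s_b) = reg ∩ Γ_b, then γ_b(s_b) = Γ_b, where reg is the set of regular (ultimately periodic) runs of g. -/

import Mathlib

namespace GG

variable {V C A : Type}

/-- Append a finite list in front of an infinite sequence. -/
def appSeq (l : List V) (ρ : ℕ → V) : ℕ → V :=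
  fun n => if n < l.length then l.getD n (ρ 0) else ρ (n - l.length)

/-- Glue two histories, identifying the last vertex of `l` with the first of `l'`. -/
def glueL (l l' : List V) : List V := l.dropLast ++ l'

/-- Glue a history with a run, identifying the last vertex of `l` with the start of `ρ`. -/
def glueR (l : List V) (ρ : ℕ → V) : ℕ → V := appSeq l.dropLast ρ

/-- Ultimately periodic (regular) sequence. -/
def UltPeriodic (ρ : ℕ → V) : Prop := ∃ k p : ℕ, 0 < p ∧ ∀ n, k ≤ n → ρ (n + p) = ρ n

/-- Strict weak order: irreflexive, transitive, with transitive incomparability. -/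
def SWO (r : (ℕ → C) → (ℕ → C) → Prop) : Prop :=
  (∀ x, ¬ r x x) ∧ (∀ x y z, r x y → r y z → r x z) ∧
    (∀ x y z, ¬ r x y → ¬ r y z → ¬ r x z)

/-- A strategy uses `m` bits of memory: it is induced by a strategic update
`σ : V × {0,1}^m → V × {0,1}^m` together with an initial memory content. -/
def UsesMem (m : ℕ) (s : List V → V) : Prop :=
  ∃ (σ : V × (Fin m → Bool) → V × (Fin m → Bool)) (M₀ : Fin m → Bool),
    ∀ (l : List V) (v : V),
      s (l ++ [v]) = (σ (v, l.foldl (fun M u => (σ (u, M)).2) M₀)).1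

/-- A finite-memory strategy. -/
def FinMem (s : List V → V) : Prop := ∃ m, UsesMem m s

/-- Regular language: recognized by a deterministic finite automaton. -/
def RegLang {α : Type} (L : Set (List α)) : Prop :=
  ∃ (Q : Type) (_ : Fintype Q) (step : Q → α → Q) (init : Q) (acc : Set Q),
    ∀ w : List α, w ∈ L ↔ w.foldl step init ∈ acc

/-- Repeat a finite word `n` times. -/
def repW (l : List C) (n : ℕ) : List C := (List.replicate n l).flatten

/-- The infinite word `u · w^ω` (with default letter `d`, unused when `w ≠ []`). -/
def extWord (d : C) (u w : List C) : ℕ → C := fun n =>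
  if n < u.length then u.getD n d else w.getD ((n - u.length) % w.length) d

/-- The regular-Mont condition for a preference on infinite color sequences. -/
def RegularMont (prec : (ℕ → C) → (ℕ → C) → Prop) : Prop :=
  ∀ (d : C) (h₀ h₁ h₂ h₃ : List C), h₁ ≠ [] → h₃ ≠ [] →
    (∀ n : ℕ, prec (extWord d (h₀ ++ repW h₁ n ++ h₂) h₃)
        (extWord d (h₀ ++ repW h₁ (n + 1) ++ h₂) h₃)) →
    prec (extWord d (h₀ ++ h₂) h₃) (extWord d h₀ h₁)

/-- The weak optimality-is-regular property of a preference. -/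
def WeakOIR (prec : (ℕ → C) → (ℕ → C) → Prop) : Prop :=
  ∀ p q : ℕ → C, UltPeriodic p → UltPeriodic q →
    ∃ M : Set (List C), RegLang M ∧ ∀ h : List C, h ∈ M ↔ prec (appSeq h p) (appSeq h q)

/-- Automatic-piecewise prefix-linearity of a preference on `C^ω` (word level). -/
def APPLword (prec : (ℕ → C) → (ℕ → C) → Prop) : Prop :=
  ∃ (Q : Type) (_ : Fintype Q) (step : Q → C → Q) (init : Q),
    ∀ h h' : List C, h.foldl step init = h'.foldl step init →
      ∀ p q : ℕ → C,
        (prec (appSeq h p) (appSeq h q) ↔ prec (appSeq h' p) (appSeq h' q))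

/-- A multi-player game played on a finite directed graph in which every
vertex has an outgoing edge. Players compare runs via color traces. -/
structure Game (V C A : Type) where
  edge : V → V → Prop
  serial : ∀ v, ∃ w, edge v w
  start : V
  owner : V → A
  color : V → C
  pref : A → (ℕ → C) → (ℕ → C) → Prop

/-- Shifted strategy `s^h`. -/
def shiftStrat (l : List V) (s : List V → V) : List V → V :=
  fun l' => s (l.dropLast ++ l')

namespace Game

variable (g : Game V C A)

def lastV (l : List V) : V := l.getLast?.getD g.start

/-- Histories: finite paths starting at the start vertex. -/
def IsHist (l : List V) : Prop :=
  l ≠ [] ∧ l.head? = some g.start ∧ l.Chain' g.edge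

/-- Runs: infinite paths starting at the start vertex. -/
def IsRun (ρ : ℕ → V) : Prop :=
  ρ 0 = g.start ∧ ∀ n, g.edge (ρ n) (ρ (n + 1))

/-- Runs are compared via their color traces. -/
def runPref (a : A) (ρ ρ' : ℕ → V) : Prop :=
  g.pref a (fun n => g.color (ρ n)) (fun n => g.color (ρ' n))

/-- Validity of a strategy on the set `P` of controlled vertices. -/
def ValidOn (P : V → Prop) (s : List V → V) : Prop :=
  ∀ l, g.IsHist l → P (g.lastV l) → g.edge (g.lastV l) (s l)

def ValidStrat (a : A) (s : List V → V) : Prop :=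
  g.ValidOn (fun v => g.owner v = a) s

/-- Validity for the coalition of all players other than `a`. -/
def ValidCo (a : A) (s : List V → V) : Prop :=
  g.ValidOn (fun v => g.owner v ≠ a) s

def _root_.GG.histUpTo (ρ : ℕ → V) (n : ℕ) : List V := (List.range (n + 1)).map ρ

def _root_.GG.CompatOn (P : V → Prop) (s : List V → V) (ρ : ℕ → V) : Prop :=
  ∀ n, P (ρ n) → ρ (n + 1) = s (GG.histUpTo ρ n)

/-- A run is compatible with a strategy of player `a`. -/
def Compat (a : A) (s : List V → V) (ρ : ℕ → V) : Prop :=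
  GG.CompatOn (fun v => g.owner v = a) s ρ

def CompatCo (a : A) (s : List V → V) (ρ : ℕ → V) : Prop :=
  GG.CompatOn (fun v => g.owner v ≠ a) s ρ

/-- `s` is a winning strategy of Player 1 (= player `a`) in the threshold game
`g_{a,ρ}`: every compatible run is strictly preferred to `ρ`. -/
def Wins1 (a : A) (ρ : ℕ → V) (s : List V → V) : Prop :=
  g.ValidStrat a s ∧ ∀ ρ', g.IsRun ρ' → g.Compat a s ρ' → g.runPref a ρ ρ'

/-- `s` is a winning strategy of Player 2 (the coalition) in the threshold game `g_{a,ρ}`. -/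
def Wins2 (a : A) (ρ : ℕ → V) (s : List V → V) : Prop :=
  g.ValidCo a s ∧ ∀ ρ', g.IsRun ρ' → g.CompatCo a s ρ' → ¬ g.runPref a ρ ρ'

/-- Player 1 wins the non-strict threshold game for `a` and `ρ` with `s`. -/
def Wins1NS (a : A) (ρ : ℕ → V) (s : List V → V) : Prop :=
  g.ValidStrat a s ∧ ∀ ρ', g.IsRun ρ' → g.Compat a s ρ' → ¬ g.runPref a ρ' ρ

/-- Player 2 wins the non-strict threshold game for `a` and `ρ` with `s`. -/
def Wins2NS (a : A) (ρ : ℕ → V) (s : List V → V) : Prop :=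
  g.ValidCo a s ∧ ∀ ρ', g.IsRun ρ' → g.CompatCo a s ρ' → g.runPref a ρ' ρ

/-- The future game `g^h` after history `l`. -/
def future (l : List V) : Game V C A where
  edge := g.edge
  serial := g.serial
  start := g.lastV l
  owner := g.owner
  color := g.color
  pref := fun a p q =>
    g.pref a (appSeq (l.dropLast.map g.color) p) (appSeq (l.dropLast.map g.color) q)

/-- The guarantee `γ_a(s)` of a strategy. -/
def gam (a : A) (s : List V → V) : Set (ℕ → V) :=
  {ρ | g.IsRun ρ ∧ ∃ ρ', g.IsRun ρ' ∧ g.Compat a s ρ' ∧ ¬ g.runPref a ρ ρ'}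

/-- The best guarantee `Γ_a`. -/
def Gam (a : A) : Set (ℕ → V) :=
  ⋂ s ∈ {s : List V → V | g.ValidStrat a s}, g.gam a s

def Optimal (a : A) (s : List V → V) : Prop := g.gam a s = g.Gam a

def OptimalAt (a : A) (s : List V → V) (l : List V) : Prop :=
  (g.future l).Optimal a (shiftStrat l s)

def SubgameOptimal (a : A) (s : List V → V) : Prop :=
  ∀ l, g.IsHist l → g.OptimalAt a s l

/-- A history is compatible with a strategy of player `a`. -/
def HistCompat (a : A) (s : List V → V) (l : List V) : Prop :=
  ∀ i : ℕ, i + 1 < l.length → g.owner (l.getD i g.start) = a →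
    l.getD (i + 1) g.start = s (l.take (i + 1))

def ConsistentOptimal (a : A) (s : List V → V) : Prop :=
  ∀ l, g.IsHist l → g.HistCompat a s l → g.OptimalAt a s l

/-- The history of the play induced by a strategy profile, up to stage `n`. -/
def playHist (prof : A → List V → V) : ℕ → List V
  | 0 => [g.start]
  | n + 1 =>
      playHist prof n ++
        [prof (g.owner (g.lastV (playHist prof n))) (playHist prof n)]

/-- The run induced by a strategy profile. -/
def play (prof : A → List V → V) : ℕ → V := fun n => g.lastV (g.playHist prof n)

/-- Nash equilibrium. -/
def IsNash [DecidableEq A] (prof : A → List V → V) : Prop :=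
  (∀ a, g.ValidStrat a (prof a)) ∧
    ∀ a s', g.ValidStrat a s' →
      ¬ g.runPref a (g.play prof) (g.play (Function.update prof a s'))

/-- Optimality of the strategy `s` of player `a` is regular using `D` bits. -/
def OptRegBits (a : A) (s : List V → V) (D : ℕ) : Prop :=
  ∃ (Q : Type) (_ : Fintype Q) (step : Q → V → Q) (init : Q) (acc : Set Q),
    Fintype.card Q ≤ 2 ^ D ∧
      ∀ l, g.IsHist l → (l.foldl step init ∈ acc ↔ g.OptimalAt a s l)

/-- Player `a` has the optimality-is-regular property in `g`. -/
def OIR (a : A) : Prop :=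
  ∀ s, g.ValidStrat a s → FinMem s →
    ∃ (Q : Type) (_ : Fintype Q) (step : Q → V → Q) (init : Q) (acc : Set Q),
      ∀ l, g.IsHist l → (l.foldl step init ∈ acc ↔ g.OptimalAt a s l)

/-- The two-player antagonistic game associated to player `a`: Player `true`
controls `V_a` with preference `≺_a`, Player `false` the remaining vertices
with the inverse preference. -/
def anta [DecidableEq A] (a : A) : Game V C Bool where
  edge := g.edge
  serial := g.serial
  start := g.start
  owner := fun v => decide (g.owner v = a)
  color := g.color
  pref := fun p x y => if p = true then g.pref a x y else g.pref a y x

/-- The cumulative glued histories `h₀⌢h₁⌢…⌢h_n`. -/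
def _root_.GG.cumul (h₀ : List V) (hs : ℕ → List V) : ℕ → List V
  | 0 => h₀
  | n + 1 => glueL (GG.cumul h₀ hs n) (hs n)

/-- The preference of player `a` is Mont in `g`. -/
def MontPref (a : A) : Prop :=
  ∀ (h₀ : List V) (ρ : ℕ → V) (hs : ℕ → List V),
    g.IsHist h₀ → UltPeriodic ρ →
    (∀ n, g.IsRun (glueR (GG.cumul h₀ hs n) ρ)) →
    (∀ n, g.runPref a (glueR (GG.cumul h₀ hs n) ρ) (glueR (GG.cumul h₀ hs (n + 1)) ρ)) →
    ∀ lim : ℕ → V,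
      (∀ n k, k < (GG.cumul h₀ hs n).dropLast.length →
        lim k = (GG.cumul h₀ hs n).dropLast.getD k g.start) →
      (∀ N, ∃ n, N < (GG.cumul h₀ hs n).dropLast.length) →
      g.runPref a (glueR h₀ ρ) lim

/-- Player `a`'s preference is automatic-piecewise prefix-linear in `g`. -/
def APPLin (a : A) : Prop :=
  ∃ (Q : Type) (_ : Fintype Q) (step : Q → V → Q) (init : Q),
    ∀ h h', g.IsHist h → g.IsHist h' →
      h.foldl step init = h'.foldl step init →
      g.lastV h = g.lastV h' ∧
        ∀ ρ ρ' : ℕ → V,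
          g.IsRun (glueR h ρ) → g.IsRun (glueR h ρ') →
          g.IsRun (glueR h' ρ) → g.IsRun (glueR h' ρ') →
          (g.runPref a (glueR h ρ) (glueR h ρ') ↔ g.runPref a (glueR h' ρ) (glueR h' ρ'))

end Game

end GG

open GG

section Aux

open Classical

variable {V C A : Type}

theorem histUpTo_concat (ρ : ℕ → V) (n : ℕ) :
    histUpTo ρ n = (List.range n).map ρ ++ [ρ n] := by
  simp [histUpTo, List.range_succ]

theorem histUpTo_succ' (ρ : ℕ → V) (n : ℕ) :
    histUpTo ρ (n + 1) = histUpTo ρ n ++ [ρ (n + 1)] := by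
  simp [histUpTo, List.range_succ]

theorem histUpTo_ne (ρ : ℕ → V) (n : ℕ) : histUpTo ρ n ≠ [] := by
  simp [histUpTo]

theorem length_histUpTo (ρ : ℕ → V) (n : ℕ) : (histUpTo ρ n).length = n + 1 := by
  simp [histUpTo]

theorem head?_histUpTo (ρ : ℕ → V) (n : ℕ) : (histUpTo ρ n).head? = some (ρ 0) := by
  simp [histUpTo, List.range_succ_eq_map]

theorem getLast?_histUpTo (ρ : ℕ → V) (n : ℕ) :
    (histUpTo ρ n).getLast? = some (ρ n) := by
  rw [histUpTo_concat, List.getLast?_concat]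

theorem lastV_histUpTo (g : Game V C A) (ρ : ℕ → V) (n : ℕ) :
    g.lastV (histUpTo ρ n) = ρ n := by
  rw [Game.lastV, getLast?_histUpTo]; rfl

theorem lastV_concat (g : Game V C A) (l : List V) (x : V) :
    g.lastV (l ++ [x]) = x := by
  rw [Game.lastV, List.getLast?_concat]; rfl

theorem lastV_singleton (g : Game V C A) (x : V) : g.lastV [x] = x := rfl

theorem isHist_histUpTo' (g : Game V C A) {ρ : ℕ → V} (h0 : ρ 0 = g.start) :
    ∀ n, (∀ k, k < n → g.edge (ρ k) (ρ (k + 1))) → g.IsHist (histUpTo ρ n) := by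
  intro n
  induction n with
  | zero =>
      intro _
      refine ⟨histUpTo_ne ρ 0, ?_, ?_⟩
      · rw [head?_histUpTo, h0]
      · show List.Chain' g.edge [ρ 0]
        exact List.isChain_singleton _
  | succ n ih =>
      intro he
      have hh := ih (fun k hk => he k (Nat.lt_succ_of_lt hk))
      refine ⟨by rw [histUpTo_succ']; simp, by rw [head?_histUpTo, h0], ?_⟩
      rw [histUpTo_succ']
      refine List.isChain_append.mpr ⟨hh.2.2, List.isChain_singleton _, ?_⟩
      intro x hx y hy
      rw [getLast?_histUpTo] at hx
      simp only [List.head?_cons, Option.mem_def, Option.some.injEq] at hx hy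
      subst hx; subst hy
      exact he n (Nat.lt_succ_self n)

theorem isHist_histUpTo (g : Game V C A) {ρ : ℕ → V} (h : g.IsRun ρ) (n : ℕ) :
    g.IsHist (histUpTo ρ n) :=
  isHist_histUpTo' g h.1 n (fun k _ => h.2 k)

/-- The history of the play of a strategy. -/
def playH (s : List V → V) (v0 : V) : ℕ → List V
  | 0 => [v0]
  | n + 1 => playH s v0 n ++ [s (playH s v0 n)]

/-- The play (induced run) of a strategy from the start vertex. -/
def playS (g : Game V C A) (s : List V → V) : ℕ → V :=
  fun n => g.lastV (playH s g.start n)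

theorem playH_eq_histUpTo (g : Game V C A) (s : List V → V) (n : ℕ) :
    playH s g.start n = histUpTo (playS g s) n := by
  induction n with
  | zero =>
      show [g.start] = histUpTo (playS g s) 0
      have h1 : playS g s 0 = g.start := rfl
      simp [histUpTo, h1, List.range_succ]
  | succ n ih =>
      rw [histUpTo_succ', ← ih]
      show playH s g.start n ++ [s (playH s g.start n)] = _
      congr 1
      show _ = [g.lastV (playH s g.start (n+1))]
      rw [playH, lastV_concat]

theorem playS_zero (g : Game V C A) (s : List V → V) : playS g s 0 = g.start := rfl

theorem playS_succ (g : Game V C A) (s : List V → V) (n : ℕ) :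
    playS g s (n + 1) = s (histUpTo (playS g s) n) := by
  show g.lastV (playH s g.start (n+1)) = _
  rw [playH, lastV_concat, playH_eq_histUpTo]

theorem playS_compat (g : Game V C A) (s : List V → V) (P : V → Prop) :
    GG.CompatOn P s (playS g s) :=
  fun n _ => playS_succ g s n

theorem playS_isRun (g : Game V C A) {s : List V → V}
    (hv : ∀ l, g.IsHist l → g.edge (g.lastV l) (s l)) : g.IsRun (playS g s) := by
  have key : ∀ n, g.edge (playS g s n) (playS g s (n + 1)) := by
    intro n
    induction n using Nat.strong_induction_on with
    | _ n ih =>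
        have hh : g.IsHist (histUpTo (playS g s) n) :=
          isHist_histUpTo' g (playS_zero g s) n (fun k hk => ih k hk)
        have := hv _ hh
        rw [lastV_histUpTo] at this
        rw [playS_succ]
        exact this
  exact ⟨playS_zero g s, key⟩

end Aux


section Aux2

open Classical

variable {V C A : Type}

/-- Memory fold of a list of vertices under a strategic update. -/
def memFold {m : ℕ} (σ : V × (Fin m → Bool) → V × (Fin m → Bool))
    (M0 : Fin m → Bool) (l : List V) : Fin m → Bool :=
  l.foldl (fun M u => (σ (u, M)).2) M0

theorem memFold_concat {m : ℕ} (σ : V × (Fin m → Bool) → V × (Fin m → Bool))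
    (M0 : Fin m → Bool) (l : List V) (x : V) :
    memFold σ M0 (l ++ [x]) = (σ (x, memFold σ M0 l)).2 := by
  simp [memFold]

/-- The play of an `m`-bit strategy is the first component of the iteration of its update. -/
theorem playS_usesMem (g : Game V C A) {s : List V → V} {m : ℕ}
    (σ : V × (Fin m → Bool) → V × (Fin m → Bool)) (M0 : Fin m → Bool)
    (hs : ∀ (l : List V) (v : V),
      s (l ++ [v]) = (σ (v, l.foldl (fun M u => (σ (u, M)).2) M0)).1) :
    ∀ n, (playS g s n, memFold σ M0 ((List.range n).map (playS g s)))
      = σ^[n] (g.start, M0) := by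
  intro n
  induction n with
  | zero => simp [memFold, playS_zero]
  | succ n ih =>
      rw [Function.iterate_succ_apply', ← ih]
      have h1 : playS g s (n + 1) = (σ (playS g s n, memFold σ M0 ((List.range n).map (playS g s)))).1 := by
        rw [playS_succ, histUpTo_concat]
        exact hs _ _
      have h2 : memFold σ M0 ((List.range (n+1)).map (playS g s))
          = (σ (playS g s n, memFold σ M0 ((List.range n).map (playS g s)))).2 := by
        rw [List.range_succ, List.map_append, List.map_singleton, memFold_concat]
      rw [h1, h2]

/-- First components of iterates of a map on a finite type are ultimately periodic. -/
theorem ultPeriodic_iterate {X : Type} [Finite X] (f : X → X) (x : X) (pr : X → V) :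
    UltPeriodic (fun n => pr (f^[n] x)) := by
  obtain ⟨i, j, hne, heq⟩ :=
    Finite.exists_ne_map_eq_of_infinite (fun n : ℕ => f^[n] x)
  have main : ∀ i j : ℕ, i < j → f^[i] x = f^[j] x →
      UltPeriodic (fun n => pr (f^[n] x)) := by
    intro i j hij he
    refine ⟨i, j - i, by omega, ?_⟩
    intro n hn
    have h1 : n + (j - i) = (n - i) + j := by omega
    have h2 : n = (n - i) + i := by omega
    simp only []
    rw [h1, Function.iterate_add_apply, ← he, ← Function.iterate_add_apply, ← h2]
  rcases Nat.lt_or_ge i j with h | h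
  · exact main i j h heq
  · exact main j i (by omega) heq.symm

theorem ultPeriodic_fst {X : Type} {ρ : ℕ → V × X} (h : UltPeriodic ρ) :
    UltPeriodic (fun n => (ρ n).1) := by
  obtain ⟨k, p, hp, hper⟩ := h
  exact ⟨k, p, hp, fun n hn => by simp only []; rw [hper n hn]⟩

/-- The strategy following a fixed run `π`. -/
noncomputable def follow (g : Game V C A) (π : ℕ → V) : List V → V := fun l =>
  if g.edge (g.lastV l) (π l.length) then π l.length
  else Classical.choose (g.serial (g.lastV l))

theorem follow_edge (g : Game V C A) (π : ℕ → V) (l : List V) :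
    g.edge (g.lastV l) (follow g π l) := by
  unfold follow
  split
  · assumption
  · exact Classical.choose_spec (g.serial (g.lastV l))

theorem follow_compat_eq (g : Game V C A) {a : A} (howner : ∀ v, g.owner v = a)
    {π : ℕ → V} (hπ : g.IsRun π) {ρ' : ℕ → V} (h1 : g.IsRun ρ')
    (h2 : g.Compat a (follow g π) ρ') : ∀ n, ρ' n = π n := by
  intro n
  induction n with
  | zero => rw [h1.1, hπ.1]
  | succ n ih =>
      have h3 := h2 n (howner _)
      rw [h3, follow]
      have e1 : g.lastV (histUpTo ρ' n) = π n := by rw [lastV_histUpTo, ih]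
      have e2 : (histUpTo ρ' n).length = n + 1 := length_histUpTo ρ' n
      have hc : g.edge (g.lastV (histUpTo ρ' n)) (π (histUpTo ρ' n).length) := by
        rw [e1, e2]; exact hπ.2 n
      rw [if_pos hc, e2]

end Aux2

section Prod

open Classical

variable {V C : Type}

/-- Product of a game with the memory of a finite-memory strategy of player `false`;
all vertices are given to player `true`, whose preference is `prec`. -/
def prodG (g : Game V C Bool) {mb : ℕ}
    (σb : V × (Fin mb → Bool) → V × (Fin mb → Bool)) (Mb0 : Fin mb → Bool)
    (prec : (ℕ → C) → (ℕ → C) → Prop) : Game (V × (Fin mb → Bool)) C Bool where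
  edge x y := g.edge x.1 y.1 ∧ y.2 = (σb x).2 ∧
    (g.owner x.1 = false → g.edge x.1 (σb x).1 → y.1 = (σb x).1)
  serial x := by
    by_cases h : g.owner x.1 = false ∧ g.edge x.1 (σb x).1
    · exact ⟨((σb x).1, (σb x).2), h.2, rfl, fun _ _ => rfl⟩
    · exact ⟨(Classical.choose (g.serial x.1), (σb x).2),
        Classical.choose_spec (g.serial x.1), rfl, fun h1 h2 => absurd ⟨h1, h2⟩ h⟩
  start := (g.start, Mb0)
  owner _ := true
  color x := g.color x.1
  pref p := cond p prec (fun _ _ => True)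

variable {g : Game V C Bool} {mb : ℕ}
  {σb : V × (Fin mb → Bool) → V × (Fin mb → Bool)} {Mb0 : Fin mb → Bool}
  {prec : (ℕ → C) → (ℕ → C) → Prop}

theorem prodG_mem {ρ' : ℕ → V × (Fin mb → Bool)}
    (h : (prodG g σb Mb0 prec).IsRun ρ') :
    ∀ n, (ρ' n).2 = memFold σb Mb0 ((List.range n).map (fun k => (ρ' k).1)) := by
  intro n
  induction n with
  | zero =>
      rw [h.1]
      rfl
  | succ n ih =>
      obtain ⟨he1, he2, he3⟩ := h.2 n
      rw [List.range_succ, List.map_append, List.map_singleton, memFold_concat, ← ih,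
        he2, Prod.mk.eta]

theorem prodG_proj {sb : List V → V} (hvsb : g.ValidStrat false sb)
    (hsb : ∀ (l : List V) (v : V),
      sb (l ++ [v]) = (σb (v, l.foldl (fun M u => (σb (u, M)).2) Mb0)).1)
    {ρ' : ℕ → V × (Fin mb → Bool)} (h : (prodG g σb Mb0 prec).IsRun ρ') :
    g.IsRun (fun n => (ρ' n).1) ∧ g.Compat false sb (fun n => (ρ' n).1) := by
  set p : ℕ → V := fun n => (ρ' n).1 with hp
  have hrun : g.IsRun p := by
    constructor
    · show (ρ' 0).1 = g.start
      rw [h.1]; rfl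
    · intro n
      exact (h.2 n).1
  refine ⟨hrun, ?_⟩
  intro n hofalse
  have hsbv : sb (histUpTo p n) = (σb (ρ' n)).1 := by
    rw [histUpTo_concat, hsb]
    have : ((List.range n).map p).foldl (fun M u => (σb (u, M)).2) Mb0 = (ρ' n).2 := by
      rw [prodG_mem h n]; rfl
    rw [this, Prod.mk.eta]
  have hedge : g.edge (p n) (sb (histUpTo p n)) := by
    have hv := hvsb (histUpTo p n) (isHist_histUpTo g hrun n)
      (by rw [lastV_histUpTo]; exact hofalse)
    rw [lastV_histUpTo] at hv
    exact hv
  have h3 := (h.2 n).2.2 hofalse (by rw [← hsbv]; exact hedge)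
  show (ρ' (n+1)).1 = _
  rw [h3, ← hsbv]

theorem prodG_lift {sb : List V → V}
    (hsb : ∀ (l : List V) (v : V),
      sb (l ++ [v]) = (σb (v, l.foldl (fun M u => (σb (u, M)).2) Mb0)).1)
    {π : ℕ → V} (hr : g.IsRun π) (hc : g.Compat false sb π) :
    (prodG g σb Mb0 prec).IsRun
      (fun n => (π n, memFold σb Mb0 ((List.range n).map π))) := by
  constructor
  · show (π 0, _) = (g.start, Mb0)
    rw [hr.1]
    rfl
  · intro n
    refine ⟨hr.2 n, ?_, ?_⟩
    · show memFold σb Mb0 ((List.range (n+1)).map π) = _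
      rw [List.range_succ, List.map_append, List.map_singleton, memFold_concat]
    · intro ho _
      have := hc n ho
      rw [histUpTo_concat, hsb] at this
      exact this

end Prod

theorem regWitness {V C : Type} [Fintype V]
    (prec : (ℕ → C) → (ℕ → C) → Prop) (hswo : GG.SWO prec)
    (hone : ∀ (V' : Type) [Fintype V'] (g' : GG.Game V' C Bool),
      (∀ v, g'.owner v = true) → g'.pref true = prec →
      ∃ m, ∀ ρ, g'.IsRun ρ → (∃ s, g'.Wins1 true ρ s) →
        ∃ s, g'.Wins1 true ρ s ∧ GG.UsesMem m s)
    (g : Game V C Bool) {sb : List V → V} (hvsb : g.ValidStrat false sb)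
    {mb : ℕ} {σb : V × (Fin mb → Bool) → V × (Fin mb → Bool)} {Mb0 : Fin mb → Bool}
    (hsb : ∀ (l : List V) (v : V),
      sb (l ++ [v]) = (σb (v, l.foldl (fun M u => (σb (u, M)).2) Mb0)).1)
    (τ : ℕ → C) (π : ℕ → V) (hπr : g.IsRun π) (hπc : g.Compat false sb π)
    (hπ : ¬ prec (fun n => g.color (π n)) τ) :
    ∃ ph, g.IsRun ph ∧ g.Compat false sb ph ∧ UltPeriodic ph ∧
      ¬ prec (fun n => g.color (ph n)) τ := by
  classical
  by_contra hcon
  push_neg at hcon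
  set g' := prodG g σb Mb0 prec with hg'
  obtain ⟨m, hm⟩ := hone (V × (Fin mb → Bool)) g' (fun _ => rfl) rfl
  have hcon' : ∀ ρ' : ℕ → V × (Fin mb → Bool), g'.IsRun ρ' → UltPeriodic ρ' →
      prec (fun n => g.color ((ρ' n).1)) τ := by
    intro ρ' h hup
    obtain ⟨hr, hc⟩ := prodG_proj hvsb hsb h
    exact hcon _ hr hc (ultPeriodic_fst hup)
  set π' : ℕ → V × (Fin mb → Bool) :=
    fun n => (π n, memFold σb Mb0 ((List.range n).map π)) with hπ'def
  have hπ'r : g'.IsRun π' := prodG_lift hsb hπr hπc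
  have hπ' : ¬ prec (fun n => g.color ((π' n).1)) τ := hπ
  -- the plays of `m`-bit strategies in `g'`
  set X := (V × (Fin mb → Bool)) × (Fin m → Bool) with hX
  set P : (X → X) × (Fin m → Bool) → ℕ → V × (Fin mb → Bool) :=
    fun t n => (t.1^[n] (g'.start, t.2)).1 with hP
  have hStep : ∀ t, g'.IsRun (P t) →
      ∃ t', g'.IsRun (P t') ∧
        prec (fun n => g.color ((P t n).1)) (fun n => g.color ((P t' n).1)) := by
    intro t hrun
    have hup : UltPeriodic (P t) := ultPeriodic_iterate t.1 (g'.start, t.2) Prod.fst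
    have h1 : prec (fun n => g.color ((P t n).1)) τ := hcon' _ hrun hup
    have h2 : prec (fun n => g.color ((P t n).1)) (fun n => g.color ((π' n).1)) := by
      by_contra h
      exact hswo.2.2 _ _ _ h hπ' h1
    have hwin : g'.Wins1 true (P t) (follow g' π') := by
      refine ⟨fun l _ _ => follow_edge g' π' l, ?_⟩
      intro ρ' hρ' hcρ'
      have he : ρ' = π' := funext (follow_compat_eq g' (fun _ => rfl) hπ'r hρ' hcρ')
      show prec _ _
      rw [he]
      exact h2
    obtain ⟨s, hws, σs, M0s, hss⟩ := hm (P t) hrun ⟨_, hwin⟩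
    have hvs : ∀ l, g'.IsHist l → g'.edge (g'.lastV l) (s l) := fun l hl => hws.1 l hl rfl
    have hlink : playS g' s = P (σs, M0s) := by
      funext n
      have := playS_usesMem g' σs M0s hss n
      exact congrArg Prod.fst this
    refine ⟨(σs, M0s), ?_, ?_⟩
    · rw [← hlink]
      exact playS_isRun g' hvs
    · have := hws.2 (playS g' s) (playS_isRun g' hvs) (playS_compat g' s _)
      rw [hlink] at this
      exact this
  -- base point
  set t0 : (X → X) × (Fin m → Bool) :=
    (fun x => ((Classical.choose (g'.serial x.1), x.2) : X), fun _ => false) with ht0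
  have h0 : g'.IsRun (P t0) := by
    constructor
    · rfl
    · intro n
      have e : P t0 (n + 1) = Classical.choose (g'.serial (P t0 n)) := by
        show (t0.1^[n+1] _).1 = _
        rw [Function.iterate_succ_apply']
      rw [e]
      exact Classical.choose_spec (g'.serial (P t0 n))
  -- the increasing sequence
  let seq : ℕ → {t : (X → X) × (Fin m → Bool) // g'.IsRun (P t)} := fun n =>
    Nat.rec ⟨t0, h0⟩
      (fun _ p => ⟨Classical.choose (hStep p.1 p.2),
        (Classical.choose_spec (hStep p.1 p.2)).1⟩) n
  have hseq : ∀ n, prec (fun k => g.color ((P (seq n).1 k).1))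
      (fun k => g.color ((P (seq (n+1)).1 k).1)) := by
    intro n
    exact (Classical.choose_spec (hStep (seq n).1 (seq n).2)).2
  have hchain : ∀ i k, prec (fun j => g.color ((P (seq i).1 j).1))
      (fun j => g.color ((P (seq (i+k+1)).1 j).1)) := by
    intro i k
    induction k with
    | zero => exact hseq i
    | succ k ih => exact hswo.2.1 _ _ _ ih (hseq (i+k+1))
  obtain ⟨i, j, hne, he⟩ := Finite.exists_ne_map_eq_of_infinite (fun n => (seq n).1)
  have main : ∀ i j : ℕ, i < j → (seq i).1 = (seq j).1 → False := by
    intro i j hij he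
    have h := hchain i (j - i - 1)
    have hidx : i + (j - i - 1) + 1 = j := by omega
    rw [hidx, ← he] at h
    exact hswo.1 _ h
  rcases Nat.lt_or_ge i j with h | h
  · exact main i j h he
  · exact main j i (by omega) he.symm

/-- Lemma 4.4.2: under uniform finite-memory winning of `a`'s winnable threshold
games in one-player games, a finite-memory strategy of `b` whose guarantee agrees
with the best guarantee on regular runs realizes the best guarantee. -/
theorem stmt9
    {C : Type}
    (prec : (ℕ → C) → (ℕ → C) → Prop) (hswo : GG.SWO prec)
    (hone : ∀ (V' : Type) [Fintype V'] (g' : GG.Game V' C Bool),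
      (∀ v, g'.owner v = true) → g'.pref true = prec →
      ∃ m, ∀ ρ, g'.IsRun ρ → (∃ s, g'.Wins1 true ρ s) →
        ∃ s, g'.Wins1 true ρ s ∧ GG.UsesMem m s) :
    ∀ (V : Type) [Fintype V] (g : GG.Game V C Bool),
      g.pref true = prec → (∀ p q, g.pref false p q ↔ prec q p) →
      ∀ sb, g.ValidStrat false sb → GG.FinMem sb →
        ({ρ | GG.UltPeriodic ρ} ∩ g.gam false sb =
          {ρ | GG.UltPeriodic ρ} ∩ g.Gam false) →
        g.gam false sb = g.Gam false := by
  intro V _ g hpt hpf sb hvsb hfm hreg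
  obtain ⟨mb, σb, Mb0, hsb⟩ := hfm
  apply Set.Subset.antisymm
  · -- γ_b(s_b) ⊆ Γ_b
    intro ρ hρ
    obtain ⟨hρr, π, hπr, hπc, hπp⟩ := hρ
    have hπ : ¬ prec (fun n => g.color (π n)) (fun n => g.color (ρ n)) :=
      fun h => hπp ((hpf _ _).mpr h)
    obtain ⟨ph, hr1, hc1, hu1, hn1⟩ :=
      regWitness prec hswo hone g hvsb hsb (fun n => g.color (ρ n)) π hπr hπc hπ
    have hphGam : ph ∈ g.Gam false := by
      have hin : ph ∈ {ρ : ℕ → V | GG.UltPeriodic ρ} ∩ g.gam false sb :=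
        ⟨hu1, hr1, ph, hr1, hc1, fun h => hswo.1 _ ((hpf _ _).mp h)⟩
      rw [hreg] at hin
      exact hin.2
    simp only [Game.Gam, Set.mem_iInter, Set.mem_setOf_eq] at hphGam ⊢
    intro s hs
    obtain ⟨_, σr, hσr, hσc, hσp⟩ := hphGam s hs
    refine ⟨hρr, σr, hσr, hσc, ?_⟩
    intro h
    exact (hswo.2.2 _ _ _ (fun h' => hσp ((hpf _ _).mpr h')) hn1) ((hpf _ _).mp h)
  · -- Γ_b ⊆ γ_b(s_b)
    intro ρ hρ
    simp only [Game.Gam, Set.mem_iInter, Set.mem_setOf_eq] at hρ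
    exact hρ sb hvsb
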